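/- Under the stated setting, if in addition Ω ⊆ B, μ and λ are absolutely continuous with respect to Lebesgue measure with densities ω ∈ L¹(Ω) and σ ∈ L¹(B) (dμ = ω(x)dx, dλ = σ(x)dx), and ω²/σ ∈ L¹(Ω), then ‖w‖₁ ≤ √(λ(B)) · √(∫_Ω ω(x)²/σ(x) dx). -/

import Mathlib

open MeasureTheory MvPolynomial
open scoped NNReal ENNReal

private lemma integrable_mul_of_sq {α : Type*} [MeasurableSpace α] {ν : Measure α}
    {f g : α → ℝ} (hf : Integrable (fun x => f x * f x) ν)
    (hg : Integrable (fun x => g x * g x) ν)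
    (hfm : AEStronglyMeasurable f ν) (hgm : AEStronglyMeasurable g ν) :
    Integrable (fun x => f x * g x) ν := by
  refine ((hf.add hg).div_const 2).mono' (hfm.mul hgm) (ae_of_all _ fun x => ?_)
  have h2 := two_mul_le_add_sq |f x| |g x|
  rw [Real.norm_eq_abs, abs_mul]
  simp only [Pi.add_apply]
  nlinarith [sq_abs (f x), sq_abs (g x), abs_nonneg (f x), abs_nonneg (g x)]

/-- Corollary (second bound): if `Ω ⊆ B`, `dμ = ω dx`, `dλ = σ dx` with
`ω ∈ L¹(Ω)`, `σ ∈ L¹(B)` and `ω²/σ ∈ L¹(Ω)`, then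
`‖w‖₁ ≤ √(λ(B)) · √(∫_Ω ω²/σ dx)`. -/
theorem cheap_rule_density_bound {d n M N : ℕ} (hMN : N ≤ M)
    (hN : N = Nat.choose (n + d) d)
    (Ω B : Set (Fin d → ℝ)) (hΩB : Ω ⊆ B)
    (hΩmeas : MeasurableSet Ω) (hBmeas : MeasurableSet B)
    (ω σ : (Fin d → ℝ) → ℝ) (hωmeas : Measurable ω) (hσmeas : Measurable σ)
    (hωnn : ∀ x, 0 ≤ ω x) (hσnn : ∀ x, 0 ≤ σ x)
    (hωL1 : IntegrableOn ω Ω) (hσL1 : IntegrableOn σ B)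
    (hratio : IntegrableOn (fun x => ω x ^ 2 / σ x) Ω)
    (hσ0 : ∀ᵐ x ∂(volume.restrict Ω), ω x ≠ 0 → σ x ≠ 0)
    (μ lam : Measure (Fin d → ℝ))
    (hμ : μ = (volume.restrict Ω).withDensity fun x => ENNReal.ofReal (ω x))
    (hlam : lam = (volume.restrict B).withDensity fun x => ENNReal.ofReal (σ x))
    (p : Fin N → MvPolynomial (Fin d) ℝ)
    (hdeg : ∀ j, (p j).totalDegree ≤ n)
    (horth : ∀ h k, ∫ x in B, eval x (p h) * eval x (p k) ∂lam
      = if h = k then 1 else 0)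
    (X : Fin M → (Fin d → ℝ)) (u : Fin M → ℝ)
    (hX : ∀ i, X i ∈ B) (hu : ∀ i, 0 < u i)
    (hquad : ∀ q : MvPolynomial (Fin d) ℝ, q.totalDegree ≤ 2 * n →
      ∫ x in B, eval x q ∂lam = ∑ i, u i * eval (X i) q)
    (m : Fin N → ℝ) (hm : ∀ j, m j = ∫ x in Ω, eval x (p j) ∂μ)
    (w : Fin M → ℝ) (hw : ∀ i, w i = u i * ∑ j, eval (X i) (p j) * m j) :
    ∑ i, |w i| ≤ Real.sqrt (lam B).toReal *
      Real.sqrt (∫ x in Ω, ω x ^ 2 / σ x) := by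
  classical
  -- measurability of polynomial evaluation
  have hPmeas : ∀ q : MvPolynomial (Fin d) ℝ, Measurable fun x : Fin d → ℝ => eval x q :=
    fun q => (MvPolynomial.continuous_eval q).measurable
  -- restricted measures
  have hres : lam.restrict B = lam := by
    rw [hlam, restrict_withDensity hBmeas, Measure.restrict_restrict hBmeas, Set.inter_self]
  have hμres : μ.restrict Ω = μ := by
    rw [hμ, restrict_withDensity hΩmeas, Measure.restrict_restrict hΩmeas, Set.inter_self]
  -- integral conversion lemmas
  have hlamInt : ∀ g : (Fin d → ℝ) → ℝ, ∫ x, g x ∂lam = ∫ x in B, σ x * g x := by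
    intro g
    rw [hlam,
      show (fun x => ENNReal.ofReal (σ x))
        = (fun x => ((Real.toNNReal (σ x) : ℝ≥0) : ENNReal)) from rfl,
      integral_withDensity_eq_integral_smul hσmeas.real_toNNReal g]
    refine integral_congr_ae (ae_of_all _ fun x => ?_)
    simp [NNReal.smul_def, Real.coe_toNNReal _ (hσnn x)]
  have hμInt : ∀ g : (Fin d → ℝ) → ℝ, ∫ x, g x ∂μ = ∫ x in Ω, ω x * g x := by
    intro g
    rw [hμ,
      show (fun x => ENNReal.ofReal (ω x))
        = (fun x => ((Real.toNNReal (ω x) : ℝ≥0) : ENNReal)) from rfl,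
      integral_withDensity_eq_integral_smul hωmeas.real_toNNReal g]
    refine integral_congr_ae (ae_of_all _ fun x => ?_)
    simp [NNReal.smul_def, Real.coe_toNNReal _ (hωnn x)]
  -- rewritten hypotheses
  have horth' : ∀ h k, ∫ x, eval x (p h) * eval x (p k) ∂lam = if h = k then 1 else 0 := by
    intro h k; have := horth h k; rwa [hres] at this
  have hquad' : ∀ q : MvPolynomial (Fin d) ℝ, q.totalDegree ≤ 2 * n →
      ∫ x, eval x q ∂lam = ∑ i, u i * eval (X i) q := by
    intro q hq; have := hquad q hq; rwa [hres] at this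
  -- integrability of products of basis polynomials
  have Pint : ∀ j, Integrable (fun x => eval x (p j) * eval x (p j)) lam := by
    intro j
    by_contra hcon
    have h1 := horth' j j
    rw [integral_undef hcon] at h1
    simp at h1
  have int_PP : ∀ h k, Integrable (fun x => eval x (p h) * eval x (p k)) lam :=
    fun h k => integrable_mul_of_sq (Pint h) (Pint k)
      (hPmeas (p h)).aestronglyMeasurable (hPmeas (p k)).aestronglyMeasurable
  -- the function f = 1_Ω · ω/σ
  set f : (Fin d → ℝ) → ℝ := Ω.indicator (fun x => ω x / σ x) with hfdef
  have hfmeas : Measurable f := (hωmeas.div hσmeas).indicator hΩmeas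
  have hσ0' : ∀ᵐ x ∂(volume.restrict Ω), σ x * (ω x / σ x) = ω x := by
    filter_upwards [hσ0] with x hx
    by_cases h : σ x = 0
    · have : ω x = 0 := by by_contra h'; exact (hx h') h
      simp [h, this]
    · field_simp
  -- key integral identity
  have key : ∀ g : (Fin d → ℝ) → ℝ, ∫ x, f x * g x ∂lam = ∫ x in Ω, ω x * g x := by
    intro g
    rw [hlamInt]
    have e : (fun x => σ x * (f x * g x))
        = fun x => Ω.indicator (fun y => σ y * (ω y / σ y * g y)) x := by
      funext x
      by_cases hx : x ∈ Ω
      · simp [hfdef, Set.indicator_of_mem hx]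
      · simp [hfdef, Set.indicator_of_notMem hx]
    rw [e, setIntegral_indicator hΩmeas, Set.inter_eq_self_of_subset_right hΩB]
    refine integral_congr_ae ?_
    filter_upwards [hσ0'] with x hx
    rw [← mul_assoc, hx]
  -- moments
  have hm' : ∀ j, m j = ∫ x in Ω, ω x * eval x (p j) := by
    intro j
    rw [hm j, hμres, hμInt]
  have mf : ∀ j, ∫ x, f x * eval x (p j) ∂lam = m j := by
    intro j; rw [key, ← hm' j]
  -- integrability of f·f
  have int_ff : Integrable (fun x => f x * f x) lam := by
    rw [hlam, integrable_withDensity_iff (hσmeas.ennreal_ofReal)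
        (ae_of_all _ fun x => ENNReal.ofReal_lt_top)]
    have e : (fun x => (f x * f x) * (ENNReal.ofReal (σ x)).toReal)
        = fun x => Ω.indicator (fun y => (ω y / σ y) * (ω y / σ y) * σ y) x := by
      funext x
      by_cases hx : x ∈ Ω
      · simp [hfdef, Set.indicator_of_mem hx, ENNReal.toReal_ofReal (hσnn x)]
      · simp [hfdef, Set.indicator_of_notMem hx]
    rw [e]
    rw [integrable_indicator_iff hΩmeas]
    unfold IntegrableOn
    rw [Measure.restrict_restrict hΩmeas, Set.inter_eq_self_of_subset_left hΩB]
    refine hratio.congr ?_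
    filter_upwards [hσ0] with x hx
    by_cases h : σ x = 0
    · have hω : ω x = 0 := by by_contra h'; exact (hx h') h
      simp [h, hω]
    · field_simp
  have int_fP : ∀ j, Integrable (fun x => f x * eval x (p j)) lam :=
    fun j => integrable_mul_of_sq int_ff (Pint j)
      hfmeas.aestronglyMeasurable (hPmeas (p j)).aestronglyMeasurable
  -- the polynomial approximation g
  set g : (Fin d → ℝ) → ℝ := fun y => ∑ j, m j * eval y (p j) with hgdef
  have efg : (fun x => f x * g x) = fun x => ∑ j, m j * (f x * eval x (p j)) := by
    funext x
    rw [hgdef, Finset.mul_sum]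
    exact Finset.sum_congr rfl fun j _ => by ring
  have egg : (fun x => g x * g x)
      = fun x => ∑ h, ∑ k, (m h * m k) * (eval x (p h) * eval x (p k)) := by
    funext x
    rw [hgdef]
    simp only [Finset.sum_mul, Finset.mul_sum]
    exact Finset.sum_congr rfl fun h _ => Finset.sum_congr rfl fun k _ => by ring
  have int_fg : Integrable (fun x => f x * g x) lam := by
    rw [efg]
    exact integrable_finset_sum _ fun j _ => (int_fP j).const_mul _
  have int_gg : Integrable (fun x => g x * g x) lam := by
    rw [egg]
    exact integrable_finset_sum _ fun h _ =>
      integrable_finset_sum _ fun k _ => (int_PP h k).const_mul _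
  -- values of the integrals
  have fg_val : ∫ x, f x * g x ∂lam = ∑ j, m j * m j := by
    rw [efg, integral_finset_sum _ fun j _ => (int_fP j).const_mul _]
    exact Finset.sum_congr rfl fun j _ => by rw [integral_const_mul, mf j]
  have gg_val : ∫ x, g x * g x ∂lam = ∑ j, m j * m j := by
    rw [egg, integral_finset_sum _ fun h _ =>
      integrable_finset_sum _ fun k _ => (int_PP h k).const_mul _]
    have inner : ∀ h, ∫ x, ∑ k, (m h * m k) * (eval x (p h) * eval x (p k)) ∂lam
        = m h * m h := by
      intro h
      rw [integral_finset_sum _ fun k _ => (int_PP h k).const_mul _]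
      have : ∀ k, ∫ x, (m h * m k) * (eval x (p h) * eval x (p k)) ∂lam
          = (m h * m k) * (if h = k then 1 else 0) := by
        intro k; rw [integral_const_mul, horth' h k]
      simp only [this, mul_ite, mul_one, mul_zero]
      simp
    exact Finset.sum_congr rfl fun h _ => inner h
  -- Bessel inequality
  have ff_val : ∫ x, f x * f x ∂lam = ∫ x in Ω, ω x ^ 2 / σ x := by
    rw [key f]
    refine setIntegral_congr_fun hΩmeas fun x hx => ?_
    simp only [hfdef, Set.indicator_of_mem hx]
    rw [pow_two, mul_div_assoc]
  have bessel : ∑ j, m j * m j ≤ ∫ x in Ω, ω x ^ 2 / σ x := by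
    have h0 : 0 ≤ ∫ x, (f x - g x) * (f x - g x) ∂lam :=
      integral_nonneg fun x => mul_self_nonneg _
    have e : (fun x => (f x - g x) * (f x - g x))
        = fun x => (f x * f x - 2 * (f x * g x)) + g x * g x := by
      funext x; ring
    have intB : Integrable (fun x => 2 * (f x * g x)) lam := int_fg.const_mul 2
    have intA : Integrable (fun x => f x * f x - 2 * (f x * g x)) lam := int_ff.sub intB
    rw [e, integral_add intA int_gg, integral_sub int_ff intB, integral_const_mul,
      fg_val, gg_val, ff_val] at h0
    linarith
  -- quadrature of g²
  have quadval : ∑ i, u i * (g (X i) * g (X i)) = ∑ j, m j * m j := by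
    set q : MvPolynomial (Fin d) ℝ := (∑ j, C (m j) * p j) ^ 2 with hq
    have hdegq : q.totalDegree ≤ 2 * n := by
      refine (totalDegree_pow _ 2).trans (Nat.mul_le_mul_left 2 ?_)
      refine (totalDegree_finset_sum _ _).trans (Finset.sup_le fun j _ => ?_)
      refine (totalDegree_mul _ _).trans ?_
      simpa [totalDegree_C] using hdeg j
    have evalq : ∀ y, eval y q = g y * g y := by
      intro y
      rw [hq, hgdef]
      simp only [map_pow, map_sum, map_mul, eval_C]
      rw [pow_two]
    have h := hquad' q hdegq
    have hL : ∫ x, eval x q ∂lam = ∑ j, m j * m j := by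
      rw [show (fun x => eval x q) = fun x => g x * g x from funext evalq]
      exact gg_val
    rw [hL] at h
    exact (Finset.sum_congr rfl fun i _ => by rw [evalq]).trans h.symm
  -- sum of weights
  have sumu : ∑ i, u i = (lam B).toReal := by
    have h := hquad (1 : MvPolynomial (Fin d) ℝ) (by simp [totalDegree_one])
    simp only [map_one, mul_one] at h
    rw [setIntegral_const, smul_eq_mul, mul_one] at h
    exact h.symm
  -- |w i|
  have habs : ∀ i, |w i| = u i * |g (X i)| := by
    intro i
    rw [hw i, abs_mul, abs_of_pos (hu i)]
    congr 2
    rw [hgdef]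
    exact Finset.sum_congr rfl fun j _ => by ring
  -- Cauchy-Schwarz
  have cs := Finset.sum_mul_sq_le_sq_mul_sq Finset.univ
    (fun i => Real.sqrt (u i)) (fun i => Real.sqrt (u i) * |g (X i)|)
  have cs' : (∑ i, u i * |g (X i)|) ^ 2
      ≤ (∑ i, u i) * ∑ i, u i * (g (X i) * g (X i)) := by
    have e1 : ∀ i : Fin M, Real.sqrt (u i) * (Real.sqrt (u i) * |g (X i)|)
        = u i * |g (X i)| := fun i => by
      rw [← mul_assoc, Real.mul_self_sqrt (hu i).le]
    have e2 : ∀ i : Fin M, Real.sqrt (u i) ^ 2 = u i := fun i => Real.sq_sqrt (hu i).le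
    have e3 : ∀ i : Fin M, (Real.sqrt (u i) * |g (X i)|) ^ 2
        = u i * (g (X i) * g (X i)) := fun i => by
      rw [mul_pow, Real.sq_sqrt (hu i).le, sq_abs, pow_two]
    calc (∑ i, u i * |g (X i)|) ^ 2
        = (∑ i, Real.sqrt (u i) * (Real.sqrt (u i) * |g (X i)|)) ^ 2 := by
          rw [Finset.sum_congr rfl fun i _ => (e1 i).symm]
      _ ≤ (∑ i, Real.sqrt (u i) ^ 2) * ∑ i, (Real.sqrt (u i) * |g (X i)|) ^ 2 := cs
      _ = (∑ i, u i) * ∑ i, u i * (g (X i) * g (X i)) := by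
          rw [Finset.sum_congr rfl fun i _ => e2 i, Finset.sum_congr rfl fun i _ => e3 i]
  -- conclusion
  have Tnn : 0 ≤ ∑ i, u i * |g (X i)| :=
    Finset.sum_nonneg fun i _ => mul_nonneg (hu i).le (abs_nonneg _)
  calc ∑ i, |w i| = ∑ i, u i * |g (X i)| := Finset.sum_congr rfl fun i _ => habs i
    _ = Real.sqrt ((∑ i, u i * |g (X i)|) ^ 2) := (Real.sqrt_sq Tnn).symm
    _ ≤ Real.sqrt ((lam B).toReal * ∫ x in Ω, ω x ^ 2 / σ x) := by
        refine Real.sqrt_le_sqrt ?_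
        refine cs'.trans ?_
        rw [sumu, quadval]
        exact mul_le_mul_of_nonneg_left bessel ENNReal.toReal_nonneg
    _ = _ := Real.sqrt_mul ENNReal.toReal_nonneg _
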